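/- Core integral bound in Proposition 3.2 (dyadic average of the angular singularity after Lorentz-frame reduction): For every γ ∈ (0,1) there is a constant C > 0 such that for every real number a ≥ 2 and every integer k ∈ ℤ: ∫_0^∞ ( y / √(y²+a²) ) · ḡ(y)^{−2−γ} · 1_{2^{−k−1} ≤ ḡ(y) ≤ 2^{−k}} dy ≤ C · 2^{kγ} / a, where ḡ(y) := √( (a/2)(√(y²+a²) − a) ). -/

import Mathlib

open MeasureTheory

noncomputable section

def gbar (a y : ℝ) : ℝ := Real.sqrt (a / 2 * (Real.sqrt (y ^ 2 + a ^ 2) - a))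

lemma sqrt_sq_add_pos {a : ℝ} (ha : 0 < a) (y : ℝ) : 0 < Real.sqrt (y ^ 2 + a ^ 2) :=
  Real.sqrt_pos.2 (by positivity)

lemma hasDeriv_sqrt_sq_add {a : ℝ} (ha : 0 < a) (y : ℝ) :
    HasDerivAt (fun x : ℝ => Real.sqrt (x ^ 2 + a ^ 2)) (y / Real.sqrt (y ^ 2 + a ^ 2)) y := by
  have h1 : HasDerivAt (fun x : ℝ => x ^ 2 + a ^ 2) (2 * y) y := by
    simpa using (hasDerivAt_pow 2 y).add_const (a ^ 2)
  have h2 := h1.sqrt (by positivity)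
  convert h2 using 1
  have h3 := (sqrt_sq_add_pos ha y).ne'
  field_simp

lemma cont_core {a : ℝ} (ha : 0 < a) :
    Continuous fun y : ℝ => y / Real.sqrt (y ^ 2 + a ^ 2) :=
  Continuous.div continuous_id
    (Real.continuous_sqrt.comp (by continuity)) fun y => (sqrt_sq_add_pos ha y).ne'

lemma integral_core {a : ℝ} (ha : 0 < a) (y₁ y₂ : ℝ) :
    ∫ y in y₁..y₂, y / Real.sqrt (y ^ 2 + a ^ 2)
      = Real.sqrt (y₂ ^ 2 + a ^ 2) - Real.sqrt (y₁ ^ 2 + a ^ 2) :=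
  intervalIntegral.integral_eq_sub_of_hasDerivAt
    (fun x _ => hasDeriv_sqrt_sq_add ha x) ((cont_core ha).intervalIntegrable _ _)

set_option maxHeartbeats 1000000 in
/-- **Core integral bound in Proposition 3.2** (dyadic average of the angular
singularity after the Lorentz-frame reduction). -/
theorem core_integral_bound (γ : ℝ) (hγ : γ ∈ Set.Ioo (0 : ℝ) 1) :
    ∃ C : ℝ, 0 < C ∧
      ∀ a : ℝ, 2 ≤ a → ∀ k : ℤ,
        (∫ y in Set.Ioi (0 : ℝ),
          if (2 : ℝ) ^ (-k - 1) ≤ gbar a y ∧ gbar a y ≤ (2 : ℝ) ^ (-k) then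
            y / Real.sqrt (y ^ 2 + a ^ 2) * gbar a y ^ (-2 - γ)
          else 0)
        ≤ C * (2 : ℝ) ^ ((k : ℝ) * γ) / a := by
  obtain ⟨hγ0, hγ1⟩ := hγ
  refine ⟨12, by norm_num, ?_⟩
  intro a ha k
  have ha0 : (0:ℝ) < a := by linarith
  set c : ℝ := (2:ℝ) ^ (-k-1) with hc
  set c' : ℝ := (2:ℝ) ^ (-k) with hc'
  have hcpos : 0 < c := zpow_pos (by norm_num) _
  have hc'pos : 0 < c' := zpow_pos (by norm_num) _
  have hcc : c' = 2 * c := by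
    rw [hc, hc', show (-k : ℤ) = (-k-1) + 1 by ring, zpow_add₀ (two_ne_zero) (-k-1) 1]
    ring
  set A : ℝ := a + 2 * c ^ 2 / a with hA
  set B : ℝ := a + 2 * c' ^ 2 / a with hB
  have haA : a < A := by
    have h0 : 0 < 2 * c ^ 2 / a := by positivity
    rw [hA]; linarith
  have hAB : A ≤ B := by
    have h1 : c ^ 2 ≤ c' ^ 2 := by nlinarith
    have h2 : 2 * c ^ 2 / a ≤ 2 * c' ^ 2 / a := by gcongr
    rw [hA, hB]; linarith
  have hApos : 0 < A := lt_trans ha0 haA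
  have hBpos : 0 < B := lt_of_lt_of_le hApos hAB
  have hA2 : 0 < A ^ 2 - a ^ 2 := by nlinarith
  have hB2 : 0 ≤ B ^ 2 - a ^ 2 := by nlinarith
  set y₁ : ℝ := Real.sqrt (A ^ 2 - a ^ 2) with hy₁
  set y₂ : ℝ := Real.sqrt (B ^ 2 - a ^ 2) with hy₂
  have hy₁pos : 0 < y₁ := Real.sqrt_pos.2 hA2
  have hy12 : y₁ ≤ y₂ := Real.sqrt_le_sqrt (by nlinarith)
  set M : ℝ := c ^ (-2 - γ) with hM
  have hMpos : 0 < M := Real.rpow_pos_of_pos hcpos _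
  -- basic facts about u = √(y²+a²)
  have hu_ge : ∀ y : ℝ, a ≤ Real.sqrt (y ^ 2 + a ^ 2) := fun y => by
    calc a = Real.sqrt (a ^ 2) := (Real.sqrt_sq ha0.le).symm
    _ ≤ Real.sqrt (y ^ 2 + a ^ 2) := Real.sqrt_le_sqrt (by nlinarith)
  -- the condition forces y ∈ [y₁, y₂] (for y > 0) and bounds gbar ^ (-2-γ)
  have hmem : ∀ y : ℝ, 0 < y → c ≤ gbar a y → gbar a y ≤ c' → y ∈ Set.Icc y₁ y₂ := by
    intro y hy h1 h2
    set u : ℝ := Real.sqrt (y ^ 2 + a ^ 2) with hu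
    have hua : a ≤ u := hu_ge y
    have ht : 0 ≤ a / 2 * (u - a) := by nlinarith
    have hsq : gbar a y ^ 2 = a / 2 * (u - a) := Real.sq_sqrt ht
    have h1' : c ^ 2 ≤ a / 2 * (u - a) := by
      rw [← hsq]; exact pow_le_pow_left₀ hcpos.le h1 2
    have h2' : a / 2 * (u - a) ≤ c' ^ 2 := by
      rw [← hsq]; exact pow_le_pow_left₀ (Real.sqrt_nonneg _) h2 2
    have hAu : A ≤ u := by
      have : 2 * c ^ 2 / a ≤ u - a := (div_le_iff₀ ha0).2 (by linarith [h1'])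
      rw [hA]; linarith
    have huB : u ≤ B := by
      have : u - a ≤ 2 * c' ^ 2 / a := (le_div_iff₀ ha0).2 (by linarith [h2'])
      rw [hB]; linarith
    have hu2 : u ^ 2 = y ^ 2 + a ^ 2 := Real.sq_sqrt (by positivity)
    have hA2u : A ^ 2 ≤ u ^ 2 := pow_le_pow_left₀ hApos.le hAu 2
    have hu2B : u ^ 2 ≤ B ^ 2 := pow_le_pow_left₀ (le_trans ha0.le hua) huB 2
    constructor
    · calc y₁ ≤ Real.sqrt (y ^ 2) := Real.sqrt_le_sqrt (by linarith)
      _ = y := Real.sqrt_sq hy.le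
    · calc y = Real.sqrt (y ^ 2) := (Real.sqrt_sq hy.le).symm
      _ ≤ y₂ := Real.sqrt_le_sqrt (by linarith)
  -- the dominating function
  set G : ℝ → ℝ :=
    Set.indicator (Set.Icc y₁ y₂) (fun y => M * (y / Real.sqrt (y ^ 2 + a ^ 2))) with hG
  have hGcont : Continuous fun y : ℝ => M * (y / Real.sqrt (y ^ 2 + a ^ 2)) :=
    continuous_const.mul (cont_core ha0)
  have hGint : Integrable G (volume.restrict (Set.Ioi (0:ℝ))) :=
    ((hGcont.integrableOn_Icc).integrable_indicator measurableSet_Icc).restrict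
  have hf_nonneg : 0 ≤ᵐ[volume.restrict (Set.Ioi (0:ℝ))] fun y =>
      if c ≤ gbar a y ∧ gbar a y ≤ c' then
        y / Real.sqrt (y ^ 2 + a ^ 2) * gbar a y ^ (-2 - γ) else 0 := by
    refine (ae_restrict_iff' measurableSet_Ioi).2 (Filter.Eventually.of_forall ?_)
    intro y hy
    simp only [Pi.zero_apply]
    split_ifs with h
    · exact mul_nonneg (div_nonneg (le_of_lt hy) (Real.sqrt_nonneg _))
        (Real.rpow_nonneg (Real.sqrt_nonneg _) _)
    · exact le_refl _
  have hfG : (fun y => if c ≤ gbar a y ∧ gbar a y ≤ c' then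
        y / Real.sqrt (y ^ 2 + a ^ 2) * gbar a y ^ (-2 - γ) else 0)
      ≤ᵐ[volume.restrict (Set.Ioi (0:ℝ))] G := by
    refine (ae_restrict_iff' measurableSet_Ioi).2 (Filter.Eventually.of_forall ?_)
    intro y hy
    dsimp only
    split_ifs with h
    · have hmem' := hmem y hy h.1 h.2
      rw [hG, Set.indicator_of_mem hmem']
      have h1 : gbar a y ^ (-2 - γ) ≤ M :=
        Real.rpow_le_rpow_of_nonpos hcpos h.1 (by linarith)
      have h2 : 0 ≤ y / Real.sqrt (y ^ 2 + a ^ 2) :=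
        div_nonneg (le_of_lt hy) (Real.sqrt_nonneg _)
      calc y / Real.sqrt (y ^ 2 + a ^ 2) * gbar a y ^ (-2 - γ)
          ≤ y / Real.sqrt (y ^ 2 + a ^ 2) * M := mul_le_mul_of_nonneg_left h1 h2
        _ = M * (y / Real.sqrt (y ^ 2 + a ^ 2)) := mul_comm _ _
    · refine Set.indicator_nonneg ?_ y
      intro x hx
      have hx0 : (0:ℝ) ≤ x := le_trans hy₁pos.le hx.1
      exact mul_nonneg hMpos.le (div_nonneg hx0 (Real.sqrt_nonneg _))
  have hstep := integral_mono_of_nonneg hf_nonneg hGint hfG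
  have hIccsub : Set.Icc y₁ y₂ ⊆ Set.Ioi (0:ℝ) := fun x hx => lt_of_lt_of_le hy₁pos hx.1
  have hGval : ∫ y in Set.Ioi (0:ℝ), G y = M * (B - A) := by
    rw [hG, integral_indicator measurableSet_Icc,
      Measure.restrict_restrict measurableSet_Icc,
      Set.inter_eq_self_of_subset_left hIccsub,
      MeasureTheory.integral_Icc_eq_integral_Ioc,
      ← intervalIntegral.integral_of_le hy12,
      intervalIntegral.integral_const_mul, integral_core ha0]
    have e1 : Real.sqrt (y₂ ^ 2 + a ^ 2) = B := by
      rw [hy₂, Real.sq_sqrt hB2, sub_add_cancel, Real.sqrt_sq hBpos.le]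
    have e2 : Real.sqrt (y₁ ^ 2 + a ^ 2) = A := by
      rw [hy₁, Real.sq_sqrt hA2.le, sub_add_cancel, Real.sqrt_sq hApos.le]
    rw [e1, e2]
  rw [hGval] at hstep
  refine le_trans hstep ?_
  have hBA : B - A = 6 * c ^ 2 / a := by
    rw [hA, hB, hcc]; ring
  have hkey : M * c ^ 2 = c ^ (-γ) := by
    rw [hM, ← Real.rpow_natCast c 2, ← Real.rpow_add hcpos]
    congr 1
    push_cast
    ring
  have hcγ : c ^ (-γ) = (2:ℝ) ^ (((k:ℝ) + 1) * γ) := by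
    rw [hc, ← Real.rpow_intCast 2 (-k-1), ← Real.rpow_mul (by norm_num : (0:ℝ) ≤ 2)]
    congr 1
    push_cast
    ring
  have h2γ : c ^ (-γ) ≤ 2 * (2:ℝ) ^ ((k:ℝ) * γ) := by
    rw [hcγ, show ((k:ℝ)+1)*γ = (k:ℝ)*γ + γ by ring, Real.rpow_add two_pos,
      mul_comm (2:ℝ) ((2:ℝ) ^ ((k:ℝ)*γ))]
    gcongr
    calc (2:ℝ) ^ γ ≤ (2:ℝ) ^ (1:ℝ) := Real.rpow_le_rpow_of_exponent_le one_le_two hγ1.le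
      _ = 2 := Real.rpow_one 2
  calc M * (B - A) = 6 * (M * c ^ 2) / a := by rw [hBA]; ring
    _ = 6 * c ^ (-γ) / a := by rw [hkey]
    _ ≤ 6 * (2 * (2:ℝ) ^ ((k:ℝ)*γ)) / a := by gcongr
    _ = 12 * (2:ℝ) ^ ((k:ℝ)*γ) / a := by ring
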